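/- arXiv:1901.01802 — 3 statements merged into one kernel-verified Lean document; each statement's English description precedes it below -/
import Mathlib

section
/- Triangle inequality for k-broad norms: let U ⊆ ℝⁿ be measurable, 1 ≤ p < ∞, A ∈ ℕ, 2 ≤ k ≤ n. There is a constant C = C(n, p) such that for any 0 < δ < β and any two disjoint finite families 𝕋₁, 𝕋₂ of δ-tubes, with the cap partition of 𝕋₁ ∪ 𝕋₂ given by (𝕋₁ ∪ 𝕋₂)[τ] = 𝕋₁[τ] ∪ 𝕋₂[τ], one has ‖Σ_{T∈𝕋₁∪𝕋₂} χ_T‖_{BL^p_{k,2A}(U)} ≤ C ( ‖Σ_{T∈𝕋₁} χ_T‖_{BL^p_{k,A}(U)} + ‖Σ_{T∈𝕋₂} χ_T‖_{BL^p_{k,A}(U)} ). -/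
open MeasureTheory Metric InnerProductGeometry
open scoped RealInnerProductSpace ENNReal NNReal

noncomputable section

/-- Euclidean space ℝⁿ. -/
abbrev Esp (n : ℕ) : Type := EuclideanSpace ℝ (Fin n)

/-- The δ-tube with centre `a` and unit direction `v`. -/
def tube (n : ℕ) (δ : ℝ) (a v : Esp n) : Set (Esp n) :=
  {x | |⟪x - a, v⟫| ≤ 1 / 2 ∧ ‖(x - a) - ⟪x - a, v⟫ • v‖ ≤ δ}

/-- Unsigned angle between a vector and a linear subspace: the infimum of the angles
between `v` and the nonzero elements of `V`. -/
def angleSub {n : ℕ} (v : Esp n) (V : Submodule ℝ (Esp n)) : ℝ :=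
  ⨅ w : {w : Esp n // w ∈ V ∧ w ≠ 0}, angle v w.1

/-- Angle between the cap of radius β centred at ω and a subspace. -/
def angleCap {n : ℕ} (β : ℝ) (ω : Esp n) (V : Submodule ℝ (Esp n)) : ℝ :=
  ⨅ u : {u : Esp n // ‖u‖ = 1 ∧ ‖u - ω‖ < β}, angleSub u.1 V

/-- `W` is a maximal β-separated subset of the unit sphere (maximality being expressed by
the fact that every unit vector lies in the cap around some element of `W`). -/
def MaximalSeparated (n : ℕ) (β : ℝ) (W : Set (Esp n)) : Prop :=
  (∀ ω ∈ W, ‖ω‖ = 1) ∧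
  (∀ ω ∈ W, ∀ ω' ∈ W, ω ≠ ω' → β ≤ ‖ω - ω'‖) ∧
  (∀ u : Esp n, ‖u‖ = 1 → ∃ ω ∈ W, ‖u - ω‖ < β)

/-- The quantity μ_𝕋(B) in the definition of the k-broad norm, for the δ-ball centred
at `c`.  The family 𝕋 of tubes is `T : ι → Set (Esp n)`, and `ω i ∈ W` is the centre of
the cap containing the direction of the tube `T i` (so the cap partition is
𝕋[τ_{ω₀}] = {T i : ω i = ω₀}). -/
def broadMu (n k A : ℕ) (p β δ : ℝ) (W : Set (Esp n)) {ι : Type} [Fintype ι]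
    (T : ι → Set (Esp n)) (ω : ι → Esp n) (c : Esp n) : ℝ≥0∞ :=
  ⨅ V : {V : Fin A → Submodule ℝ (Esp n) // ∀ a, Module.finrank ℝ (V a) = k - 1},
    ⨆ ω₀ : {ω₀ : Esp n // ω₀ ∈ W ∧ ∀ a, β < angleCap β ω₀ (V.1 a)},
      ∫⁻ x in ball c δ,
        (∑' i : {i : ι // ω i = ω₀.1}, Set.indicator (T i.1) (fun _ => (1 : ℝ≥0∞)) x) ^ p

/-- The k-broad norm ‖Σ_{T∈𝕋} χ_T‖_{BL^p_{k,A}(U)}, relative to a family of δ-balls with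
centres `b j`, a set `W` of cap centres and a cap assignment `ω` for the tubes `T`. -/
def broadNorm (n k A : ℕ) (p β δ : ℝ) (W : Set (Esp n)) {ι : Type} [Fintype ι]
    (T : ι → Set (Esp n)) (ω : ι → Esp n) (b : ℕ → Esp n) (U : Set (Esp n)) : ℝ≥0∞ :=
  (∑' j : ℕ, volume (ball (b j) δ ∩ U) / volume (ball (b j) δ) *
      broadMu n k A p β δ W T ω (b j)) ^ (1 / p)

/-- A finitely-overlapping cover of ℝⁿ by δ-balls. -/
def FinOverlapCover (n : ℕ) (δ : ℝ) (b : ℕ → Esp n) : Prop :=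
  (∀ x : Esp n, ∃ j, x ∈ ball (b j) δ) ∧
  (∀ x : Esp n, {j : ℕ | x ∈ ball (b j) δ}.Finite ∧ {j : ℕ | x ∈ ball (b j) δ}.ncard ≤ 5 ^ n)

lemma pow_two_bound {p : ℝ} (hp : 1 ≤ p) (a b : ℝ≥0∞) :
    (a + b) ^ p ≤ (2:ℝ≥0∞) ^ p * (a ^ p + b ^ p) :=
  (ENNReal.rpow_add_le_mul_rpow_add_rpow a b hp).trans
    (mul_le_mul_left (ENNReal.rpow_le_rpow_of_exponent_le one_le_two (by linarith)) _)

lemma tube_measurable (n : ℕ) (δ : ℝ) (a v : Esp n) : MeasurableSet (tube n δ a v) := by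
  have h1 : Continuous fun x : Esp n => ⟪x - a, v⟫ :=
    (continuous_id.sub continuous_const).inner continuous_const
  have h2 : Continuous fun x : Esp n => ‖(x - a) - ⟪x - a, v⟫ • v‖ :=
    ((continuous_id.sub continuous_const).sub (h1.smul continuous_const)).norm
  have : IsClosed (tube n δ a v) := by
    rw [tube, Set.setOf_and]
    exact (isClosed_le h1.abs continuous_const).inter (isClosed_le h2 continuous_const)
  exact this.measurableSet

lemma tsum_subtype_sum {m₁ m₂ : ℕ} (P : Fin m₁ ⊕ Fin m₂ → Prop)
    (f : Fin m₁ ⊕ Fin m₂ → ℝ≥0∞) :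
    ∑' i : {i // P i}, f i.1 =
      (∑' i : {i : Fin m₁ // P (Sum.inl i)}, f (Sum.inl i.1)) +
      (∑' i : {i : Fin m₂ // P (Sum.inr i)}, f (Sum.inr i.1)) := by
  classical
  rw [tsum_fintype, tsum_fintype, tsum_fintype]
  rw [Fintype.sum_equiv (Equiv.subtypeSum)
    (fun i : {i // P i} => f i.1)
    (Sum.elim (fun i : {i : Fin m₁ // P (Sum.inl i)} => f (Sum.inl i.1))
      (fun i : {i : Fin m₂ // P (Sum.inr i)} => f (Sum.inr i.1)))
    (by rintro ⟨(a|b), h⟩ <;> rfl)]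
  exact Fintype.sum_sum_type _

def concatV {α : Type} (A : ℕ) (V₁ V₂ : Fin A → α) : Fin (2*A) → α :=
  fun j => if h : (j:ℕ) < A then V₁ ⟨j, h⟩
    else V₂ ⟨(j:ℕ) - A, by have := j.isLt; omega⟩

lemma concatV_left {α : Type} (A : ℕ) (V₁ V₂ : Fin A → α) (a : Fin A) :
    concatV A V₁ V₂ ⟨a, by have := a.isLt; omega⟩ = V₁ a := by
  simp [concatV, a.isLt]

lemma concatV_right {α : Type} (A : ℕ) (V₁ V₂ : Fin A → α) (a : Fin A) :
    concatV A V₁ V₂ ⟨A + a, by have := a.isLt; omega⟩ = V₂ a := by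
  have h : ¬ ((A : ℕ) + a < A) := by omega
  simp only [concatV, dif_neg h]
  congr 1
  exact Fin.ext (by simp)

/-- Triangle inequality for k-broad norms: there is `C = C(n,p)` such that for any
measurable `U`, any two (disjointly indexed) families 𝕋₁, 𝕋₂ of δ-tubes and any cap
partitions of them (inducing the cap partition of the union),
`‖Σ_{T∈𝕋₁∪𝕋₂} χ_T‖_{BL^p_{k,2A}(U)} ≤ C (‖Σ_{T∈𝕋₁} χ_T‖_{BL^p_{k,A}(U)} +
‖Σ_{T∈𝕋₂} χ_T‖_{BL^p_{k,A}(U)})`. -/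
theorem statement7 (n k : ℕ) (hn : 2 ≤ n) (hk2 : 2 ≤ k) (hkn : k ≤ n)
    (p : ℝ) (hp : 1 ≤ p) (A : ℕ) :
    ∃ C : ℝ, 0 < C ∧
      ∀ (U : Set (Esp n)), MeasurableSet U →
      ∀ (β : ℝ), β < 1 → ∀ (δ : ℝ), 0 < δ → δ < β →
      ∀ (m₁ m₂ : ℕ) (a₁ v₁ : Fin m₁ → Esp n) (a₂ v₂ : Fin m₂ → Esp n),
        (∀ i, ‖v₁ i‖ = 1) → (∀ i, ‖v₂ i‖ = 1) →
      ∀ (W : Set (Esp n)), MaximalSeparated n β W →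
      ∀ (ω₁ : Fin m₁ → Esp n), (∀ i, ω₁ i ∈ W ∧ ‖v₁ i - ω₁ i‖ < β) →
      ∀ (ω₂ : Fin m₂ → Esp n), (∀ i, ω₂ i ∈ W ∧ ‖v₂ i - ω₂ i‖ < β) →
      ∀ (b : ℕ → Esp n),
        broadNorm n k (2 * A) p β δ W
            (Sum.elim (fun i => tube n δ (a₁ i) (v₁ i)) (fun i => tube n δ (a₂ i) (v₂ i)))
            (Sum.elim ω₁ ω₂) b U ≤
          ENNReal.ofReal C *
            (broadNorm n k A p β δ W (fun i => tube n δ (a₁ i) (v₁ i)) ω₁ b U +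
              broadNorm n k A p β δ W (fun i => tube n δ (a₂ i) (v₂ i)) ω₂ b U) := by
  refine ⟨2, two_pos, ?_⟩
  intro U hU β hβ δ hδ hδβ m₁ m₂ a₁ v₁ a₂ v₂ hv₁ hv₂ W hW ω₁ hω₁ ω₂ hω₂ b
  have hp0 : (0:ℝ) < p := lt_of_lt_of_le one_pos hp
  set T₁ : Fin m₁ → Set (Esp n) := fun i => tube n δ (a₁ i) (v₁ i) with hT₁
  set T₂ : Fin m₂ → Set (Esp n) := fun i => tube n δ (a₂ i) (v₂ i) with hT₂
  have h2pt : (2:ℝ≥0∞) ^ p ≠ ⊤ := by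
    simp [ENNReal.rpow_eq_top_iff]
  have h2p0 : (2:ℝ≥0∞) ^ p ≠ 0 := by
    simp [ENNReal.rpow_eq_zero_iff]
  -- key bound on broadMu
  have key : ∀ c : Esp n,
      broadMu n k (2*A) p β δ W (Sum.elim T₁ T₂) (Sum.elim ω₁ ω₂) c ≤
      (2:ℝ≥0∞)^p * (broadMu n k A p β δ W T₁ ω₁ c + broadMu n k A p β δ W T₂ ω₂ c) := by
    intro c
    rw [broadMu, broadMu, broadMu, mul_add,
      ENNReal.mul_iInf' (fun h => absurd h h2pt) (fun h => absurd h h2p0),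
      ENNReal.mul_iInf' (fun h => absurd h h2pt) (fun h => absurd h h2p0),
      ENNReal.iInf_add]
    simp_rw [ENNReal.add_iInf]
    refine le_iInf fun V₁ => le_iInf fun V₂ => ?_
    have hVcrank : ∀ a : Fin (2*A),
        Module.finrank ℝ (concatV A V₁.1 V₂.1 a) = k - 1 := by
      intro a
      rcases Nat.lt_or_ge (a : ℕ) A with h | h
      · rw [show a = (⟨(⟨a, h⟩ : Fin A), by have := a.isLt; omega⟩ : Fin (2*A)) from
          Fin.ext rfl, concatV_left]
        exact V₁.2 _
      · rw [show a = (⟨A + (⟨(a:ℕ) - A, by have := a.isLt; omega⟩ : Fin A),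
            by have := a.isLt; omega⟩ : Fin (2*A)) from Fin.ext (by simp; omega),
          concatV_right]
        exact V₂.2 _
    set Vc : Fin (2*A) → Submodule ℝ (Esp n) := concatV A V₁.1 V₂.1 with hVcdef
    have hV₁ : ∀ a : Fin A, Vc ⟨a, by have := a.isLt; omega⟩ = V₁.1 a :=
      fun a => concatV_left A V₁.1 V₂.1 a
    have hV₂ : ∀ a : Fin A, Vc ⟨A + a, by have := a.isLt; omega⟩ = V₂.1 a :=
      fun a => concatV_right A V₁.1 V₂.1 a
    refine (iInf_le _ ⟨Vc, hVcrank⟩).trans ?_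
    refine iSup_le ?_
    rintro ⟨ω₀, hω₀W, hω₀⟩
    set F₁ : Esp n → ℝ≥0∞ :=
      fun x => ∑' i : {i : Fin m₁ // ω₁ i = ω₀}, Set.indicator (T₁ i.1) (fun _ => (1:ℝ≥0∞)) x
      with hF₁
    set F₂ : Esp n → ℝ≥0∞ :=
      fun x => ∑' i : {i : Fin m₂ // ω₂ i = ω₀}, Set.indicator (T₂ i.1) (fun _ => (1:ℝ≥0∞)) x
      with hF₂
    have hmF₁ : Measurable F₁ :=
      Measurable.ennreal_tsum fun i => (measurable_const.indicator (tube_measurable n δ _ _))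
    have hmF₂ : Measurable F₂ :=
      Measurable.ennreal_tsum fun i => (measurable_const.indicator (tube_measurable n δ _ _))
    have he₁ : ∀ a : Fin A, β < angleCap β ω₀ (V₁.1 a) := fun a => by
      rw [← hV₁ a]
      exact hω₀ ⟨a, by have := a.isLt; omega⟩
    have he₂ : ∀ a : Fin A, β < angleCap β ω₀ (V₂.1 a) := fun a => by
      rw [← hV₂ a]
      exact hω₀ ⟨A + a, by have := a.isLt; omega⟩
    calc ∫⁻ x in ball c δ,
          (∑' i : {i : Fin m₁ ⊕ Fin m₂ // Sum.elim ω₁ ω₂ i = ω₀},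
            Set.indicator (Sum.elim T₁ T₂ i.1) (fun _ => (1:ℝ≥0∞)) x) ^ p
        = ∫⁻ x in ball c δ, (F₁ x + F₂ x) ^ p := by
          refine lintegral_congr fun x => ?_
          congr 1
          exact tsum_subtype_sum (fun i => Sum.elim ω₁ ω₂ i = ω₀)
            (fun i => Set.indicator (Sum.elim T₁ T₂ i) (fun _ => (1:ℝ≥0∞)) x)
      _ ≤ ∫⁻ x in ball c δ, (2:ℝ≥0∞)^p * (F₁ x ^ p + F₂ x ^ p) :=
          lintegral_mono fun x => pow_two_bound hp _ _
      _ = (2:ℝ≥0∞)^p * ((∫⁻ x in ball c δ, F₁ x ^ p) + ∫⁻ x in ball c δ, F₂ x ^ p) := by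
          rw [lintegral_const_mul _ (f := fun x => F₁ x ^ p + F₂ x ^ p) ((hmF₁.pow_const p).add (hmF₂.pow_const p)),
            lintegral_add_left (hmF₁.pow_const p)]
      _ ≤ (2:ℝ≥0∞)^p *
            (⨆ ω₀' : {ω₀' : Esp n // ω₀' ∈ W ∧ ∀ a, β < angleCap β ω₀' (V₁.1 a)},
              ∫⁻ x in ball c δ,
                (∑' i : {i : Fin m₁ // ω₁ i = ω₀'.1},
                  Set.indicator (T₁ i.1) (fun _ => (1:ℝ≥0∞)) x) ^ p) +
          (2:ℝ≥0∞)^p *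
            (⨆ ω₀' : {ω₀' : Esp n // ω₀' ∈ W ∧ ∀ a, β < angleCap β ω₀' (V₂.1 a)},
              ∫⁻ x in ball c δ,
                (∑' i : {i : Fin m₂ // ω₂ i = ω₀'.1},
                  Set.indicator (T₂ i.1) (fun _ => (1:ℝ≥0∞)) x) ^ p) := by
          rw [mul_add]
          refine add_le_add (mul_le_mul_right ?_ _) (mul_le_mul_right ?_ _)
          · exact le_iSup
              (fun ω₀' : {ω₀' : Esp n // ω₀' ∈ W ∧ ∀ a, β < angleCap β ω₀' (V₁.1 a)} =>
                ∫⁻ x in ball c δ,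
                  (∑' i : {i : Fin m₁ // ω₁ i = ω₀'.1},
                    Set.indicator (T₁ i.1) (fun _ => (1:ℝ≥0∞)) x) ^ p)
              ⟨ω₀, hω₀W, he₁⟩
          · exact le_iSup
              (fun ω₀' : {ω₀' : Esp n // ω₀' ∈ W ∧ ∀ a, β < angleCap β ω₀' (V₂.1 a)} =>
                ∫⁻ x in ball c δ,
                  (∑' i : {i : Fin m₂ // ω₂ i = ω₀'.1},
                    Set.indicator (T₂ i.1) (fun _ => (1:ℝ≥0∞)) x) ^ p)
              ⟨ω₀, hω₀W, he₂⟩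
  -- now the norms
  rw [broadNorm, broadNorm, broadNorm]
  set w : ℕ → ℝ≥0∞ := fun j => volume (ball (b j) δ ∩ U) / volume (ball (b j) δ) with hw
  set S₁ : ℝ≥0∞ := ∑' j, w j * broadMu n k A p β δ W T₁ ω₁ (b j) with hS₁
  set S₂ : ℝ≥0∞ := ∑' j, w j * broadMu n k A p β δ W T₂ ω₂ (b j) with hS₂
  have h1 : (∑' j, w j * broadMu n k (2*A) p β δ W (Sum.elim T₁ T₂) (Sum.elim ω₁ ω₂) (b j))
      ≤ (2:ℝ≥0∞)^p * (S₁ + S₂) := by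
    calc (∑' j, w j * broadMu n k (2*A) p β δ W (Sum.elim T₁ T₂) (Sum.elim ω₁ ω₂) (b j))
        ≤ ∑' j, ((2:ℝ≥0∞)^p * (w j * broadMu n k A p β δ W T₁ ω₁ (b j)) +
            (2:ℝ≥0∞)^p * (w j * broadMu n k A p β δ W T₂ ω₂ (b j))) := by
          refine ENNReal.tsum_le_tsum fun j => ?_
          calc w j * broadMu n k (2*A) p β δ W (Sum.elim T₁ T₂) (Sum.elim ω₁ ω₂) (b j)
              ≤ w j * ((2:ℝ≥0∞)^p * (broadMu n k A p β δ W T₁ ω₁ (b j) +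
                  broadMu n k A p β δ W T₂ ω₂ (b j))) := mul_le_mul_right (key (b j)) _
            _ = _ := by ring
      _ = (2:ℝ≥0∞)^p * (S₁ + S₂) := by
          rw [ENNReal.tsum_add, ENNReal.tsum_mul_left, ENNReal.tsum_mul_left, ← mul_add]
  have hinv : (0:ℝ) ≤ 1/p := by positivity
  calc (∑' j, w j * broadMu n k (2*A) p β δ W (Sum.elim T₁ T₂) (Sum.elim ω₁ ω₂) (b j)) ^ (1/p)
      ≤ ((2:ℝ≥0∞)^p * (S₁ + S₂)) ^ (1/p) := ENNReal.rpow_le_rpow h1 hinv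
    _ = (2:ℝ≥0∞) * (S₁ + S₂) ^ (1/p) := by
        rw [ENNReal.mul_rpow_of_nonneg _ _ hinv, ← ENNReal.rpow_mul,
          mul_one_div_cancel hp0.ne', ENNReal.rpow_one]
    _ ≤ (2:ℝ≥0∞) * (S₁ ^ (1/p) + S₂ ^ (1/p)) := by
        refine mul_le_mul_right (ENNReal.rpow_add_le_add_rpow _ _ hinv ?_) _
        rw [div_le_one hp0]; exact hp
    _ = ENNReal.ofReal 2 * (S₁ ^ (1/p) + S₂ ^ (1/p)) := by norm_num

end
end

section
/- Solution of the exponent linear system: let m and n be integers with 1 ≤ m < n and define γ_j := (1/n)·(1 − 1/n)^{j−m} for integers m ≤ j ≤ n−1. Then for every integer i with m+1 ≤ i ≤ n one has Σ_{j=m}^{i−1} (n + i − j − 1)·γ_j = i − m. -/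
/-- Solution of the exponent linear system: for integers `1 ≤ m < n` and
`γ_j = (1/n)(1 − 1/n)^{j−m}`, one has `Σ_{j=m}^{i−1} (n+i−j−1)γ_j = i − m` for all
integers `m+1 ≤ i ≤ n`. -/
theorem statement14 (m n : ℤ) (hm : 1 ≤ m) (hmn : m < n)
    (i : ℤ) (hi : m + 1 ≤ i) (hin : i ≤ n) :
    ∑ j ∈ Finset.Icc m (i - 1),
        ((n : ℝ) + (i : ℝ) - (j : ℝ) - 1) * (1 / (n : ℝ) * (1 - 1 / (n : ℝ)) ^ (j - m)) =
      (i : ℝ) - (m : ℝ) := by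
  have hn2 : (2 : ℤ) ≤ n := by omega
  have hnR : (2 : ℝ) ≤ (n : ℝ) := by exact_mod_cast hn2
  have hn0 : (n : ℝ) ≠ 0 := by linarith
  have hlt : 1 / (n : ℝ) < 1 := by
    rw [div_lt_one (by linarith)]; linarith
  have hr : (1 - 1 / (n : ℝ)) ≠ 0 := by linarith
  have key : ∀ i : ℤ, m + 1 ≤ i →
      (∑ j ∈ Finset.Icc m (i - 1),
        ((n : ℝ) + (i : ℝ) - (j : ℝ) - 1) * (1 / (n : ℝ) * (1 - 1 / (n : ℝ)) ^ (j - m)) =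
        (i : ℝ) - (m : ℝ)) ∧
      (∑ j ∈ Finset.Icc m (i - 1),
        (1 / (n : ℝ) * (1 - 1 / (n : ℝ)) ^ (j - m)) =
        1 - (1 - 1 / (n : ℝ)) ^ (i - m)) := by
    refine Int.le_induction ?_ ?_
    ·
      have h1 : m + 1 - 1 = m := by ring
      rw [h1, Finset.Icc_self, Finset.sum_singleton, Finset.sum_singleton, sub_self,
        zpow_zero]
      constructor
      · push_cast
        field_simp
        ring
      · have h2 : m + 1 - m = (1 : ℤ) := by ring
        rw [h2, zpow_one]
        ring
    · intro i hi ih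
      obtain ⟨ih1, ih2⟩ := ih
      have h1 : i + 1 - 1 = i := by ring
      rw [h1]
      have hIcc : Finset.Icc m i = insert i (Finset.Icc m (i - 1)) := by
        ext x; simp only [Finset.mem_Icc, Finset.mem_insert]; omega
      have hnotmem : i ∉ Finset.Icc m (i - 1) := by
        simp only [Finset.mem_Icc]; omega
      rw [hIcc, Finset.sum_insert hnotmem, Finset.sum_insert hnotmem]
      have hz : (1 - 1 / (n : ℝ)) ^ (i + 1 - m) =
          (1 - 1 / (n : ℝ)) ^ (i - m) * (1 - 1 / (n : ℝ)) := by
        rw [← zpow_add_one₀ hr]; ring_nf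
      constructor
      · have expand : ∀ j ∈ Finset.Icc m (i - 1),
            ((n : ℝ) + ((i : ℤ) + 1 : ℤ) - (j : ℝ) - 1) *
              (1 / (n : ℝ) * (1 - 1 / (n : ℝ)) ^ (j - m)) =
            ((n : ℝ) + (i : ℝ) - (j : ℝ) - 1) * (1 / (n : ℝ) * (1 - 1 / (n : ℝ)) ^ (j - m)) +
              (1 / (n : ℝ) * (1 - 1 / (n : ℝ)) ^ (j - m)) := by
          intro j _; push_cast; ring
        rw [Finset.sum_congr rfl expand, Finset.sum_add_distrib, ih1, ih2]
        push_cast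
        field_simp
        ring
      · rw [ih2, hz]
        ring
  exact (key i hi).1
end

section
/- Let Ω ∈ (1/2, 1) be the unique real number satisfying Ω·e^Ω = 1 (equivalently e^Ω = Ω^{−1}). Then for every integer n ≥ 2, min_{k∈ℤ, 2 ≤ k ≤ n} max{ (n/(n−1))^{n−k}, (n−1)/(n−k+1) } < Ω^{−1}. -/
/-- For the omega constant `Ω ∈ (1/2, 1)` (the solution of `Ω e^Ω = 1`), and every
`n ≥ 2`, `min_{2 ≤ k ≤ n} max{(n/(n−1))^{n−k}, (n−1)/(n−k+1)} < Ω⁻¹`. -/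
theorem statement15 (Ω : ℝ) (hΩmem : Ω ∈ Set.Ioo (1 / 2 : ℝ) 1)
    (hΩ : Ω * Real.exp Ω = 1) (n : ℕ) (hn : 2 ≤ n) :
    (Finset.Icc 2 n).inf' (Finset.nonempty_Icc.mpr hn)
        (fun k => max (((n : ℝ) / ((n : ℝ) - 1)) ^ (n - k))
          (((n : ℝ) - 1) / ((n : ℝ) - (k : ℝ) + 1))) < Ω⁻¹ := by
  obtain ⟨hΩ0, hΩ1⟩ := hΩmem
  have hΩpos : (0:ℝ) < Ω := by linarith
  have hexp : Real.exp Ω = Ω⁻¹ := by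
    field_simp
    linarith [hΩ]
  have hn2 : (2:ℝ) ≤ (n:ℝ) := by exact_mod_cast hn
  have hn1 : (1:ℝ) ≤ (n:ℝ) - 1 := by linarith
  set x := Ω * ((n:ℝ) - 1) with hxdef
  have hx0 : 0 ≤ x := by positivity
  set m := ⌊x⌋₊ with hmdef
  have hmx : (m:ℝ) ≤ x := Nat.floor_le hx0
  have hxm : x < m + 1 := Nat.lt_floor_add_one x
  have hmlt : (m:ℝ) < (n:ℝ) - 1 := by nlinarith
  have hmn : m + 2 ≤ n := by
    have h : ((m + 1 : ℕ) : ℝ) < (n : ℝ) := by push_cast; linarith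
    have := Nat.cast_lt.mp h
    omega
  rw [← hexp]
  rw [Finset.inf'_lt_iff]
  refine ⟨n - m, Finset.mem_Icc.mpr ⟨by omega, by omega⟩, ?_⟩
  have hkey : n - (n - m) = m := by omega
  have hcast : ((n - m : ℕ) : ℝ) = (n:ℝ) - m := by
    have h : m ≤ n := by omega
    push_cast [h]; ring
  simp only [hkey, hcast]
  apply max_lt
  · rcases Nat.eq_zero_or_pos m with hm0 | hmpos
    · rw [hm0, pow_zero, ← Real.exp_zero]
      exact Real.exp_lt_exp.mpr hΩpos
    · have hbase : (n:ℝ) / ((n:ℝ) - 1) = 1 / ((n:ℝ) - 1) + 1 := by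
        field_simp
        ring
      have hlt : (n:ℝ) / ((n:ℝ) - 1) < Real.exp (1 / ((n:ℝ) - 1)) := by
        rw [hbase]
        exact Real.add_one_lt_exp (by positivity)
      have h1 : ((n:ℝ) / ((n:ℝ) - 1)) ^ m < Real.exp (1 / ((n:ℝ) - 1)) ^ m :=
        pow_lt_pow_left₀ hlt (by positivity) (by omega)
      have h2 : Real.exp (1 / ((n:ℝ) - 1)) ^ m = Real.exp (m * (1 / ((n:ℝ) - 1))) := by
        rw [← Real.exp_nat_mul]
      have h3 : (m:ℝ) * (1 / ((n:ℝ) - 1)) ≤ Ω := by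
        rw [mul_one_div, div_le_iff₀ (by linarith)]
        linarith
      calc ((n:ℝ) / ((n:ℝ) - 1)) ^ m < Real.exp (m * (1 / ((n:ℝ) - 1))) := h2 ▸ h1
        _ ≤ Real.exp Ω := Real.exp_le_exp.mpr h3
  · have heq : (n:ℝ) - ((n:ℝ) - m) + 1 = (m:ℝ) + 1 := by ring
    rw [heq, hexp]
    rw [div_lt_iff₀ (by positivity : (0:ℝ) < (m:ℝ) + 1), inv_mul_eq_div,
      lt_div_iff₀ hΩpos]
    nlinarith
end
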